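/- For all $\rho,r$ with $0\le2\rho<r<R$, there exists $c>0$ (depending only on $\rho,r,k$) such that for every choice of $z_1,\dots,z_k$ with $\max_i|z_i|\le\rho$ and every analytic $f$ on $D=\{|z|<R\}$ with $f(0)=0$, $\left\|\frac{1}{k}\sum_{j=1}^k\frac{f(\cdot)-f(z_j)}{\cdot-z_j}\right\|_r\ge c\cdot\|f\|_r$. -/

import Mathlib

set_option maxHeartbeats 1000000

open Metric NNReal ENNReal Filter Set Complex Topology

private lemma re_term_bound {r ρ : ℝ} (hρ0 : 0 ≤ ρ) (h1 : 2 * ρ < r) {u v : ℂ}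
    (hu : ‖u‖ = r) (hv : ‖v‖ ≤ ρ) : (2 : ℝ) / 9 ≤ (u * (u - v)⁻¹).re := by
  have hr : 0 < r := by linarith
  have hvu : ‖v‖ < ‖u‖ := by rw [hu]; linarith
  have hne : u - v ≠ 0 := by
    intro h
    rw [sub_eq_zero] at h
    rw [h] at hvu; exact lt_irrefl _ hvu
  have hnorm_le : ‖u - v‖ ≤ r + ρ := by
    have := norm_sub_le u v
    rw [hu] at this; linarith [hv]
  have hnsq_pos : 0 < Complex.normSq (u - v) := Complex.normSq_pos.2 hne
  have hnsq_le : Complex.normSq (u - v) ≤ (r + ρ) ^ 2 := by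
    rw [Complex.normSq_eq_norm_sq]
    nlinarith [norm_nonneg (u - v)]
  have hdiv : u * (u - v)⁻¹ = u / (u - v) := by rw [div_eq_mul_inv]
  rw [hdiv, Complex.div_re]
  have hnum : u.re * (u - v).re + u.im * (u - v).im = (u * (starRingEnd ℂ) (u - v)).re := by
    simp [Complex.mul_re, Complex.conj_re, Complex.conj_im]; ring
  have hconj : (u * (starRingEnd ℂ) (u - v)).re
      = Complex.normSq u - (u * (starRingEnd ℂ) v).re := by
    rw [map_sub, mul_sub, Complex.sub_re, Complex.mul_conj]
    simp
  have habs : (u * (starRingEnd ℂ) v).re ≤ r * ρ := by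
    have h1' : (u * (starRingEnd ℂ) v).re ≤ ‖u * (starRingEnd ℂ) v‖ := by
      exact Complex.re_le_norm _
    have h2' : ‖u * (starRingEnd ℂ) v‖ = ‖u‖ * ‖v‖ := by
      simp only [norm_mul, Complex.norm_conj]
    rw [h2', hu] at h1'
    calc (u * (starRingEnd ℂ) v).re ≤ r * ‖v‖ := h1'
    _ ≤ r * ρ := mul_le_mul_of_nonneg_left hv hr.le
  have hnormsqu : Complex.normSq u = r ^ 2 := by
    rw [Complex.normSq_eq_norm_sq, hu]
  have hnum_ge : r ^ 2 - r * ρ ≤ u.re * (u - v).re + u.im * (u - v).im := by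
    rw [hnum, hconj, hnormsqu]; linarith
  rw [← add_div, le_div_iff₀ hnsq_pos]
  nlinarith [mul_nonneg (by linarith : (0:ℝ) ≤ r - 2*ρ) (by linarith : (0:ℝ) ≤ 7*r + ρ)]

/-- Lemma 2: coercivity of `L`. For `0 ≤ 2ρ < r < R` there is `c > 0`,
independent of `z₁, …, z_k`, such that `‖L f‖ᵣ ≥ c ‖f‖ᵣ` for all `f ∈ H₀`.
Here `g` is the analytic extension of `L f`. -/
theorem L_coercive (R : ℝ) (k : ℕ) (hk : 1 ≤ k) (ρ r : ℝ)
    (hρ0 : 0 ≤ ρ) (h1 : 2 * ρ < r) (h2 : r < R) :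
    ∃ c > (0 : ℝ), ∀ z : Fin k → ℂ, (∀ i, ‖z i‖ ≤ ρ) →
      ∀ f g : ℂ → ℂ,
        DifferentiableOn ℂ f (Metric.ball (0 : ℂ) R) → f 0 = 0 →
        DifferentiableOn ℂ g (Metric.ball (0 : ℂ) R) →
        (∀ w ∈ Metric.ball (0 : ℂ) R, (∀ j, w ≠ z j) →
          g w = (1 / (k : ℂ)) * ∑ j, (f w - f (z j)) / (w - z j)) →
        ∀ w : ℂ, ‖w‖ ≤ r →
          c * ‖f w‖ ≤
            sSup ((fun u => ‖g u‖) '' Metric.closedBall (0 : ℂ) r) := by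
  have hr : 0 < r := by linarith
  have hρr : ρ < r := by linarith
  have hrne : r ≠ 0 := ne_of_gt (by linarith)
  have hrρ : 0 < r - ρ := by linarith
  have hr2ρ : 0 < r - 2 * ρ := by linarith
  have hrρne : r - ρ ≠ 0 := ne_of_gt hrρ
  have hr2ρne : r - 2 * ρ ≠ 0 := ne_of_gt hr2ρ
  set C₁ : ℝ := (9 * r / 2) * (1 + r * ρ / ((r - 2 * ρ) * (r - ρ))) with hC₁_def
  have hC₁_pos : 0 < C₁ := by
    apply _root_.mul_pos (by linarith)
    have : 0 ≤ r * ρ / ((r - 2 * ρ) * (r - ρ)) := by positivity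
    linarith
  refine ⟨C₁⁻¹, inv_pos.2 hC₁_pos, ?_⟩
  intro z hz f g hf hf0 hg hfg w hw
  set G : ℝ := sSup ((fun u => ‖g u‖) '' Metric.closedBall (0 : ℂ) r) with hG_def
  have hgcont : ContinuousOn g (Metric.closedBall (0:ℂ) r) :=
    hg.continuousOn.mono (closedBall_subset_ball h2)
  have hGbdd : BddAbove ((fun u => ‖g u‖) '' Metric.closedBall (0 : ℂ) r) := by
    have hGset : ((fun u => ‖g u‖) '' Metric.closedBall (0 : ℂ) r)
        = ((fun u => ‖g u‖) '' Metric.closedBall (0 : ℂ) r) := by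
      rfl
    rw [hGset]
    exact (isCompact_closedBall _ _).bddAbove_image hgcont.norm
  have hgle : ∀ u : ℂ, ‖u‖ ≤ r → ‖g u‖ ≤ G := by
    intro u hu
    have hm : ‖g u‖ ∈ ((fun u => ‖g u‖) '' Metric.closedBall (0 : ℂ) r) :=
      ⟨u, by simpa [Metric.mem_closedBall, dist_zero_right] using hu, rfl⟩
    simpa using le_csSup hGbdd hm
  have hG0 : 0 ≤ G := le_trans (norm_nonneg _) (hgle 0 (by simpa using hr.le))
  -- power series of f on ball of radius s
  set s : ℝ := (r + R) / 2 with hs_def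
  have hrs : r < s := by rw [hs_def]; linarith
  have hsR : s < R := by rw [hs_def]; linarith
  have hs0 : 0 < s := by linarith
  set sN : ℝ≥0 := ⟨s, hs0.le⟩ with hsN_def
  have hsN : (sN : ℝ) = s := rfl
  have hsN0 : 0 < sN := by rwa [← NNReal.coe_pos, hsN]
  have hfs : HasFPowerSeriesOnBall f (cauchyPowerSeries f 0 sN) 0 sN := by
    apply DifferentiableOn.hasFPowerSeriesOnBall _ hsN0
    exact hf.mono (by rw [hsN]; exact closedBall_subset_ball hsR)
  set a : ℕ → ℂ := fun n => (cauchyPowerSeries f 0 sN).coeff n with ha_def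
  have hsum : ∀ u : ℂ, ‖u‖ < s → HasSum (fun n => a n * u ^ n) (f u) := by
    intro u hu
    have hmem : u ∈ EMetric.ball (0 : ℂ) sN := by
      have h' : u ∈ ball (0 : ℂ) sN := by rw [mem_ball_zero_iff, hsN]; exact hu
      rw [← Metric.emetric_ball_nnreal] at h'
      exact h'
    have h := hfs.hasSum hmem
    rw [zero_add] at h
    have e : (fun n => a n * u ^ n) = fun n => (cauchyPowerSeries f 0 sN n) fun _ => u := by
      funext n
      rw [FormalMultilinearSeries.apply_eq_pow_smul_coeff, smul_eq_mul]
      ring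
    rw [e]; exact h
  have ha0 : a 0 = 0 := by
    have h := hsum 0 (by simpa using hs0)
    have h2' : HasSum (fun n => a n * (0:ℂ) ^ n) (a 0) := by
      convert hasSum_single (f := fun n => a n * (0:ℂ) ^ n) 0 ?_ using 1
      · simp
      · intro b hb
        simp [zero_pow hb]
    rw [← hf0]
    exact (h.unique h2').symm
  -- a priori coefficient bound
  obtain ⟨C, hCpos, hC⟩ : ∃ C, 0 < C ∧ ∀ n, ‖a n‖ * r ^ n ≤ C := by
    have hrlt : ((r.toNNReal : ℝ≥0) : ℝ≥0∞) < (cauchyPowerSeries f 0 sN).radius := by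
      apply lt_of_lt_of_le _ hfs.r_le
      rw [ENNReal.coe_lt_coe, ← NNReal.coe_lt_coe, Real.coe_toNNReal _ hr.le, hsN]
      exact hrs
    obtain ⟨C, hC0, hC⟩ := (cauchyPowerSeries f 0 sN).norm_mul_pow_le_of_lt_radius hrlt
    refine ⟨C, hC0, fun n => ?_⟩
    have h := hC n
    rwa [FormalMultilinearSeries.norm_apply_eq_norm_coef, Real.coe_toNNReal _ hr.le] at h
  have hCa : ∀ n, ‖a n‖ ≤ C / r ^ n := fun n =>
    (le_div_iff₀ (pow_pos hr n)).2 (hC n)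
  -- geometric facts
  have ht0 : 0 ≤ ρ / r := by positivity
  have ht1 : ρ / r < 1 := (div_lt_one hr).2 hρr
  have hgeo : Summable (fun m : ℕ => (ρ / r) ^ m) := summable_geometric_of_lt_one ht0 ht1
  have hgeo_sum : ∑' m : ℕ, (ρ / r) ^ m = (1 - ρ / r)⁻¹ := tsum_geometric_of_lt_one ht0 ht1
  -- tails
  set ccx : ℂ → ℕ → ℂ := fun x p => ∑' m, a (p + 1 + m) * x ^ m with hccx_def
  -- generic term bound
  have hterm : ∀ (q' : ℝ), (∀ n, ‖a (n + 1)‖ ≤ q' / r ^ (n + 1)) →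
      ∀ (x : ℂ), ‖x‖ ≤ ρ → ∀ p m, ‖a (p + 1 + m) * x ^ m‖ ≤ q' / r ^ (p + 1) * (ρ / r) ^ m := by
    intro q' hq' x hx p m
    have h01 : ‖a (p + 1 + m) * x ^ m‖ = ‖a (p + m + 1)‖ * ‖x‖ ^ m := by
      rw [norm_mul, norm_pow]; congr 3; omega
    rw [h01]
    have hb1 : ‖a (p + m + 1)‖ ≤ q' / r ^ (p + m + 1) := hq' (p + m)
    have hb2 : ‖x‖ ^ m ≤ ρ ^ m := pow_le_pow_left₀ (norm_nonneg x) hx m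
    have hq'0 : 0 ≤ q' := by
      have h0 : (0:ℝ) ≤ q' / r ^ (0 + 1) := le_trans (norm_nonneg (a 1)) (hq' 0)
      rcases div_nonneg_iff.1 h0 with ⟨h, _⟩ | ⟨_, h'⟩
      · exact h
      · exfalso
        have hpos : (0:ℝ) < r ^ (0 + 1) := by positivity
        linarith
    have : ‖a (p + m + 1)‖ * ‖x‖ ^ m ≤ q' / r ^ (p + m + 1) * ρ ^ m :=
      mul_le_mul hb1 hb2 (by positivity) (by positivity)
    apply le_trans this
    apply le_of_eq
    have hexp : p + m + 1 = p + 1 + m := by omega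
    rw [hexp, div_pow, pow_add]
    field_simp [hrne]
    try ring
  have hq'0 : ∀ (q' : ℝ), (∀ n, ‖a (n + 1)‖ ≤ q' / r ^ (n + 1)) → 0 ≤ q' := by
    intro q' hq'
    have h0 : (0:ℝ) ≤ q' / r ^ (0 + 1) := le_trans (norm_nonneg (a 1)) (hq' 0)
    rcases div_nonneg_iff.1 h0 with ⟨h, _⟩ | ⟨_, h'⟩
    · exact h
    · exfalso; have : (0:ℝ) < r ^ (0 + 1) := by positivity
      linarith

  have hCa' : ∀ n, ‖a (n + 1)‖ ≤ C / r ^ (n + 1) := fun n => hCa (n + 1)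
  -- summability of tails
  have hsumm : ∀ (q' : ℝ), (∀ n, ‖a (n + 1)‖ ≤ q' / r ^ (n + 1)) →
      ∀ (x : ℂ), ‖x‖ ≤ ρ → ∀ p, Summable (fun m => a (p + 1 + m) * x ^ m) := by
    intro q' hq' x hx p
    exact Summable.of_norm_bounded (hgeo.mul_left _) (hterm q' hq' x hx p)
  -- tail norm bound
  have hccb : ∀ (q' : ℝ), (∀ n, ‖a (n + 1)‖ ≤ q' / r ^ (n + 1)) →
      ∀ (x : ℂ), ‖x‖ ≤ ρ → ∀ p, ‖ccx x p‖ ≤ q' / (r ^ p * (r - ρ)) := by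
    intro q' hq' x hx p
    have hgs : HasSum (fun m : ℕ => q' / r ^ (p + 1) * (ρ / r) ^ m)
        (q' / r ^ (p + 1) * (1 - ρ / r)⁻¹) := by
      exact (hasSum_geometric_of_lt_one ht0 ht1).mul_left _
    have hb := tsum_of_norm_bounded hgs (hterm q' hq' x hx p)
    have heq : q' / r ^ (p + 1) * (1 - ρ / r)⁻¹ = q' / (r ^ p * (r - ρ)) := by
      have h1'' : 1 - ρ / r = (r - ρ) / r := by field_simp
      rw [h1'', inv_div, pow_succ]
      field_simp
    rw [heq] at hb
    exact hb
  -- recursion for tails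
  have hccRec : ∀ (x : ℂ), ‖x‖ ≤ ρ → ∀ p, ccx x p = a (p + 1) + x * ccx x (p + 1) := by
    intro x hx p
    have hS := hsumm C hCa' x hx p
    simp only [hccx_def]
    rw [Summable.tsum_eq_zero_add hS]
    simp only [pow_zero, mul_one, add_zero]
    congr 1
    rw [← _root_.tsum_mul_left]
    apply tsum_congr; intro m
    have hidx : p + 1 + (m + 1) = p + 1 + 1 + m := by omega
    rw [hidx, pow_succ]
    ring
  -- value of f from tails
  have hval : ∀ (x : ℂ), ‖x‖ ≤ ρ → f x = x * ccx x 0 := by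
    intro x hx
    have hxs : ‖x‖ < s := by linarith [le_trans hx hρr.le]
    have h' := Summable.tsum_eq_zero_add (hsum x hxs).summable
    rw [(hsum x hxs).tsum_eq] at h'
    rw [h', ha0]
    simp only [hccx_def, zero_mul, pow_zero, mul_one, zero_add]
    rw [← _root_.tsum_mul_left]
    apply tsum_congr; intro m
    have hidx : 0 + 1 + m = m + 1 := by omega
    rw [hidx, pow_succ]
    ring
  -- summability of the power series with tail coefficients
  have hSu : ∀ (x : ℂ), ‖x‖ ≤ ρ → ∀ (u : ℂ), ‖u‖ < r →
      Summable (fun p => ccx x p * u ^ p) := by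
    intro x hx u hu
    have hgeo_u : Summable (fun p : ℕ => C / (r - ρ) * (‖u‖ / r) ^ p) := by
      apply Summable.mul_left
      exact summable_geometric_of_lt_one (by positivity) ((div_lt_one hr).2 hu)
    apply Summable.of_norm_bounded hgeo_u
    intro p
    rw [norm_mul, norm_pow]
    calc ‖ccx x p‖ * ‖u‖ ^ p ≤ C / (r ^ p * (r - ρ)) * ‖u‖ ^ p := by
          apply mul_le_mul_of_nonneg_right (hccb C hCa' x hx p) (by positivity)
      _ = C / (r - ρ) * (‖u‖ / r) ^ p := by
          rw [div_pow]
          field_simp [hrne, hrρne]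
          try ring
          try exact Or.inl trivial
  -- key identity
  have hkey : ∀ (x : ℂ), ‖x‖ ≤ ρ → ∀ (u : ℂ), ‖u‖ < r →
      f u - f x = (u - x) * ∑' p, ccx x p * u ^ p := by
    intro x hx u hu
    have hus : ‖u‖ < s := by linarith
    have S1 : Summable (fun p => ccx x p * u ^ p) := hSu x hx u hu
    have S1' : Summable (fun p => ccx x (p + 1) * u ^ (p + 1)) :=
      ((_root_.summable_nat_add_iff 1).2 S1)
    have S2 : Summable (fun p => a (p + 1) * u ^ p) := by
      have hgeo_u : Summable (fun p : ℕ => C / r * (‖u‖ / r) ^ p) := by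
        apply Summable.mul_left
        exact summable_geometric_of_lt_one (by positivity) ((div_lt_one hr).2 hu)
      apply Summable.of_norm_bounded hgeo_u
      intro p
      rw [norm_mul, norm_pow]
      calc ‖a (p + 1)‖ * ‖u‖ ^ p ≤ C / r ^ (p + 1) * ‖u‖ ^ p := by
            apply mul_le_mul_of_nonneg_right (hCa' p) (by positivity)
        _ = C / r * (‖u‖ / r) ^ p := by
            rw [div_pow, pow_succ]
            field_simp [hrne]
            try ring
            try exact Or.inl trivial
    have S1u : Summable (fun p => ccx x p * u ^ (p + 1)) := by
      apply (S1.mul_left u).congr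
      intro p; rw [pow_succ]; ring
    have S2u : Summable (fun p => a (p + 1) * u ^ (p + 1)) := by
      apply (S2.mul_left u).congr
      intro p; rw [pow_succ]; ring
    set h : ℂ := ∑' p, ccx x p * u ^ p with hh_def
    have hsplit : h = ccx x 0 + ∑' p, ccx x (p + 1) * u ^ (p + 1) := by
      rw [hh_def, Summable.tsum_eq_zero_add S1]
      simp
    have e1 : u * h = ∑' p, ccx x p * u ^ (p + 1) := by
      rw [hh_def, ← _root_.tsum_mul_left]
      apply tsum_congr; intro p; rw [pow_succ]; ring
    have e2 : ∑' p, a (p + 1) * u ^ (p + 1) = f u := by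
      have h' := Summable.tsum_eq_zero_add (hsum u hus).summable
      rw [(hsum u hus).tsum_eq] at h'
      rw [h', ha0]
      simp
    have e3 : x * h = f x + (u * h - f u) := by
      calc x * h = x * ccx x 0 + x * ∑' p, ccx x (p + 1) * u ^ (p + 1) := by
            rw [hsplit, mul_add]
        _ = f x + ∑' p, (x * ccx x (p + 1)) * u ^ (p + 1) := by
            rw [← hval x hx, ← _root_.tsum_mul_left]
            congr 1
            apply tsum_congr; intro p; ring
        _ = f x + (∑' p, ccx x p * u ^ (p + 1) - ∑' p, a (p + 1) * u ^ (p + 1)) := by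
            congr 1
            rw [← Summable.tsum_sub S1u S2u]
            apply tsum_congr; intro p
            have hrc := hccRec x hx p
            have : x * ccx x (p + 1) = ccx x p - a (p + 1) := by
              rw [hrc]; ring
            rw [this]; ring
        _ = f x + (u * h - f u) := by rw [e1, e2]
    linear_combination e3
  -- division form
  have hkeyDiv : ∀ (x : ℂ), ‖x‖ ≤ ρ → ∀ (u : ℂ), ‖u‖ < r → u ≠ x →
      (f u - f x) / (u - x) = ∑' p, ccx x p * u ^ p := by
    intro x hx u hu hne
    rw [hkey x hx u hu, mul_div_cancel_left₀ _ (sub_ne_zero.2 hne)]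
  -- averaged coefficients
  have hk0 : (k : ℂ) ≠ 0 := Nat.cast_ne_zero.2 (by omega)
  have hkR : (1 : ℝ) ≤ (k : ℝ) := by exact_mod_cast hk
  set d : ℕ → ℂ := fun p => (k : ℂ)⁻¹ * ∑ j, ccx (z j) p with hd_def
  have hgd : ∀ (u : ℂ), ‖u‖ < r → (∀ j, u ≠ z j) → g u = ∑' p, d p * u ^ p := by
    intro u hu hne
    have huR : u ∈ ball (0 : ℂ) R := by rw [mem_ball_zero_iff]; linarith
    rw [hfg u huR hne]
    calc (1 / (k : ℂ)) * ∑ j, (f u - f (z j)) / (u - z j)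
        = (k : ℂ)⁻¹ * ∑ j, ∑' p, ccx (z j) p * u ^ p := by
          rw [one_div]
          congr 1
          exact Finset.sum_congr rfl fun j _ => hkeyDiv (z j) (hz j) u hu (hne j)
      _ = (k : ℂ)⁻¹ * ∑' p, ∑ j, ccx (z j) p * u ^ p := by
          congr 1
          exact (Summable.tsum_finsetSum (fun j _ => hSu (z j) (hz j) u hu)).symm
      _ = ∑' p, d p * u ^ p := by
          rw [← _root_.tsum_mul_left]
          apply tsum_congr; intro p
          rw [hd_def, ← Finset.sum_mul]
          ring
  -- the formal series D
  set D : FormalMultilinearSeries ℂ ℂ ℂ := FormalMultilinearSeries.ofScalars ℂ d with hD_def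
  have hDnorm : ∀ n, ‖D n‖ = ‖d n‖ := fun n => by
    rw [hD_def]; exact FormalMultilinearSeries.ofScalars_norm ℂ d n
  have hdB : ∀ p, ‖d p‖ * r ^ p ≤ C / (r - ρ) := by
    intro p
    have hsumb : ‖∑ j, ccx (z j) p‖ ≤ (k : ℝ) * (C / (r ^ p * (r - ρ))) := by
      calc ‖∑ j, ccx (z j) p‖ ≤ ∑ j, ‖ccx (z j) p‖ := norm_sum_le _ _
        _ ≤ ∑ _j : Fin k, C / (r ^ p * (r - ρ)) :=
            Finset.sum_le_sum fun j _ => hccb C hCa' (z j) (hz j) p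
        _ = (k : ℝ) * (C / (r ^ p * (r - ρ))) := by
            rw [Finset.sum_const, Finset.card_univ, Fintype.card_fin, nsmul_eq_mul]
    have hd1 : ‖d p‖ ≤ C / (r ^ p * (r - ρ)) := by
      rw [hd_def]
      simp only []
      rw [norm_mul, norm_inv, Complex.norm_natCast]
      calc (k : ℝ)⁻¹ * ‖∑ j, ccx (z j) p‖
          ≤ (k : ℝ)⁻¹ * ((k : ℝ) * (C / (r ^ p * (r - ρ)))) := by
            apply mul_le_mul_of_nonneg_left hsumb (by positivity)
        _ = C / (r ^ p * (r - ρ)) := by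
            rw [← mul_assoc, inv_mul_cancel₀ (by positivity : (k:ℝ) ≠ 0), one_mul]
    calc ‖d p‖ * r ^ p ≤ C / (r ^ p * (r - ρ)) * r ^ p := by
          apply mul_le_mul_of_nonneg_right hd1 (by positivity)
      _ = C / (r - ρ) := by field_simp
  have hDrad : 0 < D.radius := by
    have hle : ((r.toNNReal : ℝ≥0) : ℝ≥0∞) ≤ D.radius := by
      apply D.le_radius_of_bound (C / (r - ρ))
      intro n
      rw [hDnorm n, Real.coe_toNNReal _ hr.le]
      exact hdB n
    apply lt_of_lt_of_le _ hle
    rw [ENNReal.coe_pos]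
    exact Real.toNNReal_pos.2 hr
  have hDat : HasFPowerSeriesAt D.sum D 0 := (D.hasFPowerSeriesOnBall hDrad).hasFPowerSeriesAt
  have hDval : ∀ u : ℂ, D.sum u = ∑' p, d p * u ^ p := by
    intro u
    rw [FormalMultilinearSeries.sum]
    apply tsum_congr; intro n
    rw [hD_def]
    rw [FormalMultilinearSeries.ofScalars_apply_eq, smul_eq_mul]
  -- eventual equality near 0
  have hfeq : g =ᶠ[𝓝 (0 : ℂ)] D.sum := by
    have hfin : (Set.range z \ {0}).Finite := (Set.finite_range z).diff
    have hclosed : IsClosed (Set.range z \ {0}) := hfin.isClosed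
    have hV : (ball (0 : ℂ) r \ (Set.range z \ {0})) ∈ 𝓝 (0 : ℂ) := by
      apply IsOpen.mem_nhds (isOpen_ball.sdiff hclosed)
      constructor
      · rw [mem_ball_zero_iff]; simpa using hr
      · intro hmem
        exact hmem.2 rfl
    have hpunct : ∀ᶠ u in 𝓝 (0 : ℂ), u ≠ 0 → g u = D.sum u := by
      filter_upwards [hV] with u hu hu0
      have hne : ∀ j, u ≠ z j := by
        intro j heq
        exact hu.2 ⟨⟨j, heq.symm⟩, hu0⟩
      rw [hgd u (mem_ball_zero_iff.1 hu.1) hne, hDval u]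
    have hg0D : g 0 = D.sum 0 := by
      have hgc : ContinuousAt g 0 := by
        apply DifferentiableAt.continuousAt (𝕜 := ℂ)
        apply hg.differentiableAt
        apply isOpen_ball.mem_nhds
        rw [mem_ball_zero_iff]; simpa using (lt_trans hr h2)
      have hDc : ContinuousAt D.sum 0 := hDat.continuousAt
      have hEq' : g =ᶠ[𝓝[≠] (0 : ℂ)] D.sum := by
        filter_upwards [eventually_nhdsWithin_of_eventually_nhds hpunct,
          self_mem_nhdsWithin] with u h hu
        exact h hu
      have t1 : Tendsto g (𝓝[≠] (0 : ℂ)) (𝓝 (g 0)) := hgc.tendsto.mono_left nhdsWithin_le_nhds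
      have t2 : Tendsto g (𝓝[≠] (0 : ℂ)) (𝓝 (D.sum 0)) :=
        Tendsto.congr' hEq'.symm (hDc.tendsto.mono_left nhdsWithin_le_nhds)
      exact tendsto_nhds_unique t1 t2
    filter_upwards [hpunct] with u h
    rcases eq_or_ne u 0 with rfl | hu0
    · exact hg0D
    · exact h hu0
  have hgD : HasFPowerSeriesAt g D 0 := hDat.congr hfeq.symm
  -- Cauchy estimates for d via the circle of radius r
  set rN : ℝ≥0 := ⟨r, hr.le⟩ with hrN_def
  have hrN : (rN : ℝ) = r := rfl
  have hQ : HasFPowerSeriesOnBall g (cauchyPowerSeries g 0 rN) 0 rN := by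
    apply DifferentiableOn.hasFPowerSeriesOnBall _ (by rwa [← NNReal.coe_pos, hrN])
    exact hg.mono (by rw [hrN]; exact closedBall_subset_ball h2)
  have hQD : cauchyPowerSeries g 0 rN = D :=
    hQ.hasFPowerSeriesAt.eq_formalMultilinearSeries hgD
  have hdG : ∀ p, ‖d p‖ ≤ G / r ^ p := by
    intro p
    have hcoeff : D.coeff p = d p := by
      rw [hD_def]
      simp [FormalMultilinearSeries.coeff, FormalMultilinearSeries.ofScalars, Pi.one_def,
        List.ofFn_const, List.prod_replicate, one_pow]
    have hnq : ‖d p‖ = ‖cauchyPowerSeries g 0 rN p‖ := by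
      rw [FormalMultilinearSeries.norm_apply_eq_norm_coef, hQD, hcoeff]
    have hb := norm_cauchyPowerSeries_le g 0 (rN : ℝ) p
    have hint : (∫ θ : ℝ in (0)..2 * Real.pi, ‖g (circleMap 0 (rN : ℝ) θ)‖)
        ≤ 2 * Real.pi * G := by
      have hcont : Continuous fun θ : ℝ => ‖g (circleMap 0 (rN : ℝ) θ)‖ := by
        apply Continuous.norm
        apply hg.continuousOn.comp_continuous (continuous_circleMap 0 (rN : ℝ))
        intro θ
        rw [mem_ball_zero_iff, norm_circleMap_zero, hrN,
          abs_of_pos hr]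
        exact h2
      calc (∫ θ : ℝ in (0)..2 * Real.pi, ‖g (circleMap 0 (rN : ℝ) θ)‖)
          ≤ ∫ _θ : ℝ in (0)..2 * Real.pi, G := by
            apply intervalIntegral.integral_mono_on Real.two_pi_pos.le
              (hcont.intervalIntegrable _ _) intervalIntegrable_const
            intro θ _
            apply hgle
            rw [norm_circleMap_zero, hrN, abs_of_pos hr]
        _ = 2 * Real.pi * G := by
            rw [intervalIntegral.integral_const, smul_eq_mul]
            ring
    rw [hnq]
    calc ‖cauchyPowerSeries g 0 (rN : ℝ) p‖
        ≤ ((2 * Real.pi)⁻¹ * ∫ θ : ℝ in (0)..2 * Real.pi, ‖g (circleMap 0 (rN:ℝ) θ)‖)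
            * |(rN : ℝ)|⁻¹ ^ p := hb
      _ ≤ ((2 * Real.pi)⁻¹ * (2 * Real.pi * G)) * |(rN : ℝ)|⁻¹ ^ p := by
          apply mul_le_mul_of_nonneg_right _ (by positivity)
          apply mul_le_mul_of_nonneg_left hint (by positivity)
      _ = G / r ^ p := by
          rw [hrN, abs_of_pos hr, ← mul_assoc, inv_mul_cancel₀ (by positivity : 2*Real.pi ≠ 0),
            one_mul, inv_pow]
          rw [div_eq_mul_inv]
  -- the supremum q
  have hbdd : BddAbove (Set.range fun n => ‖a (n + 1)‖ * r ^ (n + 1)) := by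
    refine ⟨C, ?_⟩
    rintro x ⟨n, rfl⟩
    exact hC (n + 1)
  set q : ℝ := ⨆ n, ‖a (n + 1)‖ * r ^ (n + 1) with hq_def
  have hqle : ∀ n, ‖a (n + 1)‖ * r ^ (n + 1) ≤ q := fun n => le_ciSup hbdd n
  have hq0 : 0 ≤ q := le_trans (by positivity) (hqle 0)
  have hqa : ∀ n, ‖a (n + 1)‖ ≤ q / r ^ (n + 1) := fun n =>
    (le_div_iff₀ (by positivity)).2 (hqle n)
  have hrec : ∀ p, ‖a (p + 1)‖ * r ^ (p + 1) ≤ G * r + q * (ρ / (r - ρ)) := by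
    intro p
    have hdp : a (p + 1) = d p - (k : ℂ)⁻¹ * ∑ j, z j * ccx (z j) (p + 1) := by
      have h1' : d p = (k : ℂ)⁻¹ * ∑ j, (a (p + 1) + z j * ccx (z j) (p + 1)) := by
        rw [hd_def]
        exact congrArg (fun t => (k : ℂ)⁻¹ * t)
          (Finset.sum_congr rfl fun j _ => hccRec (z j) (hz j) p)
      rw [h1', Finset.sum_add_distrib, Finset.sum_const, Finset.card_univ, Fintype.card_fin,
        mul_add, nsmul_eq_mul, ← mul_assoc, inv_mul_cancel₀ hk0, one_mul]
      ring
    have hb1 : ‖(k : ℂ)⁻¹ * ∑ j, z j * ccx (z j) (p + 1)‖ ≤ ρ * (q / (r ^ (p + 1) * (r - ρ))) := by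
      rw [norm_mul, norm_inv, Complex.norm_natCast]
      have h2' : ‖∑ j, z j * ccx (z j) (p + 1)‖
          ≤ (k : ℝ) * (ρ * (q / (r ^ (p + 1) * (r - ρ)))) := by
        calc ‖∑ j, z j * ccx (z j) (p + 1)‖ ≤ ∑ j, ‖z j * ccx (z j) (p + 1)‖ := norm_sum_le _ _
          _ ≤ ∑ _j : Fin k, ρ * (q / (r ^ (p + 1) * (r - ρ))) := by
              apply Finset.sum_le_sum
              intro j _
              rw [norm_mul]
              exact mul_le_mul (hz j) (hccb q hqa (z j) (hz j) (p + 1)) (norm_nonneg _) hρ0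
          _ = (k : ℝ) * (ρ * (q / (r ^ (p + 1) * (r - ρ)))) := by
              rw [Finset.sum_const, Finset.card_univ, Fintype.card_fin, nsmul_eq_mul]
      calc (k : ℝ)⁻¹ * ‖∑ j, z j * ccx (z j) (p + 1)‖
          ≤ (k : ℝ)⁻¹ * ((k : ℝ) * (ρ * (q / (r ^ (p + 1) * (r - ρ))))) := by
            apply mul_le_mul_of_nonneg_left h2' (by positivity)
        _ = ρ * (q / (r ^ (p + 1) * (r - ρ))) := by
            rw [← mul_assoc, inv_mul_cancel₀ (by positivity : (k:ℝ) ≠ 0), one_mul]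
    calc ‖a (p + 1)‖ * r ^ (p + 1)
        ≤ (‖d p‖ + ρ * (q / (r ^ (p + 1) * (r - ρ)))) * r ^ (p + 1) := by
          apply mul_le_mul_of_nonneg_right _ (by positivity)
          rw [hdp]
          exact le_trans (norm_sub_le _ _) (add_le_add_right hb1 _)
      _ ≤ (G / r ^ p + ρ * (q / (r ^ (p + 1) * (r - ρ)))) * r ^ (p + 1) := by
          apply mul_le_mul_of_nonneg_right (add_le_add_left (hdG p) _) (by positivity)
      _ = G * r + q * (ρ / (r - ρ)) := by
          rw [pow_succ]
          field_simp
  have hq_final : q ≤ G * r + q * (ρ / (r - ρ)) := ciSup_le hrec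
  have hqG : q * (r - 2 * ρ) ≤ G * r * (r - ρ) := by
    have h' : q * (ρ / (r - ρ)) * (r - ρ) = q * ρ := by field_simp
    nlinarith [mul_le_mul_of_nonneg_right hq_final hrρ.le]
  have hNj : ∀ j, ‖f (z j)‖ ≤ G * r * ρ / (r - 2 * ρ) := by
    intro j
    rw [hval (z j) (hz j), norm_mul]
    calc ‖z j‖ * ‖ccx (z j) 0‖ ≤ ρ * (q / (r ^ 0 * (r - ρ))) :=
          mul_le_mul (hz j) (hccb q hqa (z j) (hz j) 0) (norm_nonneg _) hρ0
      _ = ρ * q / (r - ρ) := by rw [pow_zero, one_mul]; ring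
      _ ≤ G * r * ρ / (r - 2 * ρ) := by
          rw [div_le_div_iff₀ hrρ hr2ρ]
          nlinarith [mul_le_mul_of_nonneg_right hqG hρ0]

  -- bound on the sphere of radius r
  have hsphere : ∀ u : ℂ, ‖u‖ = r → ‖f u‖ ≤ C₁ * G := by
    intro u hu
    have hne : ∀ j, u ≠ z j := by
      intro j heq
      have := hz j
      rw [← heq, hu] at this
      linarith
    have huR : u ∈ ball (0 : ℂ) R := by rw [mem_ball_zero_iff, hu]; exact h2
    have hgu := hfg u huR hne
    set A : ℂ := ∑ j, (u - z j)⁻¹ with hA_def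
    set Bv : ℂ := ∑ j, f (z j) * (u - z j)⁻¹ with hB_def
    have hiden : f u * A = (k : ℂ) * g u + Bv := by
      have h1' : (k : ℂ) * g u = f u * A - Bv := by
        rw [hgu, ← mul_assoc, mul_one_div, div_self hk0, one_mul, hA_def, hB_def,
          Finset.mul_sum, ← Finset.sum_sub_distrib]
        apply Finset.sum_congr rfl
        intro j _
        rw [div_eq_mul_inv, sub_mul]
      rw [h1']; ring
    have hsub_ne : ∀ j, u - z j ≠ 0 := fun j => sub_ne_zero.2 (hne j)
    have hsub_ge : ∀ j, r - ρ ≤ ‖u - z j‖ := by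
      intro j
      calc r - ρ ≤ ‖u‖ - ‖z j‖ := by rw [hu]; linarith [hz j]
        _ ≤ ‖u - z j‖ := norm_sub_norm_le _ _
    -- lower bound for A
    have hAlow : 2 * (k : ℝ) / 9 ≤ r * ‖A‖ := by
      have hre : 2 * (k : ℝ) / 9 ≤ (u * A).re := by
        have h1' : u * A = ∑ j, u * (u - z j)⁻¹ := by rw [hA_def, Finset.mul_sum]
        rw [h1', Complex.re_sum]
        calc 2 * (k : ℝ) / 9 = ∑ _j : Fin k, (2:ℝ)/9 := by
              rw [Finset.sum_const, Finset.card_univ, Fintype.card_fin, nsmul_eq_mul]; ring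
          _ ≤ ∑ j, (u * (u - z j)⁻¹).re := by
              apply Finset.sum_le_sum
              intro j _
              exact re_term_bound hρ0 h1 hu (hz j)
      calc 2 * (k : ℝ) / 9 ≤ (u * A).re := hre
        _ ≤ ‖u * A‖ := by exact Complex.re_le_norm _
        _ = r * ‖A‖ := by rw [norm_mul, hu]
    -- upper bound
    have hBb : ‖Bv‖ ≤ (k : ℝ) * (G * r * ρ / (r - 2 * ρ) / (r - ρ)) := by
      calc ‖Bv‖ ≤ ∑ j, ‖f (z j) * (u - z j)⁻¹‖ := norm_sum_le _ _
        _ ≤ ∑ _j : Fin k, G * r * ρ / (r - 2 * ρ) / (r - ρ) := by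
            apply Finset.sum_le_sum
            intro j _
            rw [norm_mul, norm_inv]
            have h1' : ‖(u - z j)‖⁻¹ ≤ (r - ρ)⁻¹ :=
              inv_anti₀ hrρ (hsub_ge j)
            calc ‖f (z j)‖ * ‖u - z j‖⁻¹ ≤ (G * r * ρ / (r - 2 * ρ)) * (r - ρ)⁻¹ := by
                  apply mul_le_mul (hNj j) h1' (by positivity)
                    (div_nonneg (mul_nonneg (mul_nonneg hG0 hr.le) hρ0) hr2ρ.le)
              _ = G * r * ρ / (r - 2 * ρ) / (r - ρ) := by ring
        _ = (k : ℝ) * (G * r * ρ / (r - 2 * ρ) / (r - ρ)) := by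
            rw [Finset.sum_const, Finset.card_univ, Fintype.card_fin, nsmul_eq_mul]
    have hup : ‖f u * A‖ ≤ (k : ℝ) * G + (k : ℝ) * (G * r * ρ / (r - 2 * ρ) / (r - ρ)) := by
      rw [hiden]
      calc ‖(k : ℂ) * g u + Bv‖ ≤ ‖(k : ℂ) * g u‖ + ‖Bv‖ := norm_add_le _ _
        _ ≤ (k : ℝ) * G + (k : ℝ) * (G * r * ρ / (r - 2 * ρ) / (r - ρ)) := by
            apply add_le_add _ hBb
            rw [norm_mul, Complex.norm_natCast]
            exact mul_le_mul_of_nonneg_left (hgle u hu.le) (by positivity)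
    -- combine
    have hcomb : ‖f u‖ * (2 * (k : ℝ) / 9) ≤
        r * ((k : ℝ) * G + (k : ℝ) * (G * r * ρ / (r - 2 * ρ) / (r - ρ))) := by
      calc ‖f u‖ * (2 * (k : ℝ) / 9) ≤ ‖f u‖ * (r * ‖A‖) :=
            mul_le_mul_of_nonneg_left hAlow (norm_nonneg _)
        _ = r * (‖f u‖ * ‖A‖) := by ring
        _ = r * ‖f u * A‖ := by rw [norm_mul]
        _ ≤ r * ((k : ℝ) * G + (k : ℝ) * (G * r * ρ / (r - 2 * ρ) / (r - ρ))) := by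
            apply mul_le_mul_of_nonneg_left hup hr.le
    have hkpos : (0:ℝ) < (k : ℝ) := by linarith
    have hfinal : ‖f u‖ * (2 * (k : ℝ) / 9) ≤ (C₁ * G) * (2 * (k : ℝ) / (9 * r)) * r := by
      calc ‖f u‖ * (2 * (k : ℝ) / 9) ≤
          r * ((k : ℝ) * G + (k : ℝ) * (G * r * ρ / (r - 2 * ρ) / (r - ρ))) := hcomb
        _ = (C₁ * G) * (2 * (k : ℝ) / (9 * r)) * r := by
            rw [hC₁_def]
            field_simp
    have h29 : (0:ℝ) < 2 * (k : ℝ) / 9 := by positivity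
    have : (C₁ * G) * (2 * (k : ℝ) / (9 * r)) * r = (C₁ * G) * (2 * (k : ℝ) / 9) := by
      field_simp
    rw [this] at hfinal
    exact le_of_mul_le_mul_right hfinal h29
  -- maximum principle
  have hmax : ‖f w‖ ≤ C₁ * G := by
    have hDC : DiffContOnCl ℂ f (ball (0 : ℂ) r) := by
      constructor
      · exact hf.mono (ball_subset_ball h2.le)
      · rw [closure_ball (0 : ℂ) hr.ne']
        exact hf.continuousOn.mono (closedBall_subset_ball h2)
    apply Complex.norm_le_of_forall_mem_frontier_norm_le isBounded_ball hDC
    · intro x hx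
      rw [frontier_ball (0 : ℂ) hr.ne', mem_sphere_zero_iff_norm] at hx
      exact hsphere x hx
    · rw [closure_ball (0 : ℂ) hr.ne', mem_closedBall_zero_iff]
      exact hw
  calc C₁⁻¹ * ‖f w‖ ≤ C₁⁻¹ * (C₁ * G) :=
        mul_le_mul_of_nonneg_left hmax (inv_nonneg.2 hC₁_pos.le)
    _ = G := by
        rw [← mul_assoc, inv_mul_cancel₀ hC₁_pos.ne', one_mul]
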